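/- (Stabilized semi-implicit scheme as a generalized proximal step.) Let H be a finite-dimensional real inner product space, L : H → H an invertible self-adjoint linear operator, σ > 0, α > 0, and suppose I − σαL is invertible and S := −(I − σαL)⁻¹ L is a positive definite self-adjoint operator. Let F, G : H → ℝ be continuously differentiable with G convex. Then a point Φ₊ satisfies the stabilized semi-implicit scheme (Φ₊ − Φ₀)/α = L(∇G(Φ₊) + ∇F(Φ₀) + σ(Φ₊ − Φ₀)) if and only if Φ₊ ∈ argmin_Φ { αG(Φ) + (1/2)⟨Φ − b, S⁻¹(Φ − b)⟩ } with b = Φ₀ − αS∇F(Φ₀), i.e. Φ₊ = GProx_{αG, S⁻¹}(Φ₀ − αS∇F(Φ₀)). -/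

import Mathlib

open RealInnerProductSpace

/-- Gradient inequality for convex differentiable functions. -/
lemma my_convex_grad_ineq {H : Type*} [NormedAddCommGroup H] [InnerProductSpace ℝ H] [CompleteSpace H] [CompleteSpace H]
    {G : H → ℝ} (hG_convex : ConvexOn ℝ Set.univ G) {x y g : H}
    (hg : HasGradientAt G g x) : G x + ⟪g, y - x⟫ ≤ G y := by
  set φ : ℝ → ℝ := fun t => G (t • (y - x) + x) with hφ
  have hφc : ConvexOn ℝ Set.univ φ := by
    have := hG_convex.comp_affineMap (AffineMap.lineMap x y : ℝ →ᵃ[ℝ] H)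
    simpa [hφ, Function.comp_def, AffineMap.lineMap_apply] using this
  have hc : HasDerivAt (fun t : ℝ => t • (y - x) + x) (y - x) 0 := by
    simpa using ((hasDerivAt_id (0:ℝ)).smul_const (y - x)).add_const x
  have hφd : HasDerivAt φ ⟪g, y - x⟫ 0 := by
    have hx0 : (0:ℝ) • (y - x) + x = x := by simp
    have hg' : HasFDerivAt G ((InnerProductSpace.toDual ℝ H) g) ((0:ℝ) • (y - x) + x) := by
      rw [hx0]; exact hg.hasFDerivAt
    have := hg'.comp_hasDerivAt 0 hc
    simpa [hφ, Function.comp_def, InnerProductSpace.toDual_apply_apply] using this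
  have hs := hφc.le_slope_of_hasDerivAt (Set.mem_univ (0:ℝ)) (Set.mem_univ (1:ℝ))
    one_pos hφd
  have h0 : φ 0 = G x := by simp [hφ]
  have h1 : φ 1 = G y := by simp [hφ]
  rw [slope_def_field, h0, h1] at hs
  simp only [div_one, sub_zero] at hs
  linarith

/-- Gradient of the quadratic form `z ↦ (1/2) ⟪z - b, A (z - b)⟫` for symmetric `A`. -/
lemma my_quad_grad {H : Type*} [NormedAddCommGroup H] [InnerProductSpace ℝ H] [CompleteSpace H]
    (A : H →L[ℝ] H) (hA : ∀ x y : H, ⟪A x, y⟫ = ⟪x, A y⟫) (b x : H) :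
    HasGradientAt (fun z => (1/2 : ℝ) * ⟪z - b, A (z - b)⟫) (A (x - b)) x := by
  have hu : HasFDerivAt (fun z : H => z - b) (ContinuousLinearMap.id ℝ H) x :=
    (hasFDerivAt_id x).sub_const b
  have hv : HasFDerivAt (fun z : H => A (z - b)) (A.comp (ContinuousLinearMap.id ℝ H)) x :=
    A.hasFDerivAt.comp x hu
  have hinner := hu.inner ℝ hv
  have h2 := hinner.const_mul (1/2 : ℝ)
  rw [hasGradientAt_iff_hasFDerivAt]
  convert h2 using 1
  · rfl
  ext v
  simp only [ContinuousLinearMap.smul_apply, ContinuousLinearMap.comp_apply,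
    fderivInnerCLM_apply, ContinuousLinearMap.prod_apply, ContinuousLinearMap.coe_id', id_eq,
    InnerProductSpace.toDual_apply_apply, smul_eq_mul]
  have : ⟪x - b, A v⟫ = ⟪A (x - b), v⟫ := (hA (x - b) v).symm
  rw [this, real_inner_comm v (A (x - b))]
  ring

/-- The stabilized semi-implicit scheme as a generalized proximal step:
with `T = I - σαL` invertible and `S = -(T⁻¹ ∘ L)` positive definite and
self-adjoint, `Φ₊` satisfies
`(Φ₊ - Φ₀)/α = L(∇G(Φ₊) + ∇F(Φ₀) + σ(Φ₊ - Φ₀))` if and only if `Φ₊`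
minimizes `Φ ↦ α G(Φ) + (1/2)⟪Φ - b, S⁻¹(Φ - b)⟫` where
`b = Φ₀ - α S ∇F(Φ₀)`, i.e. `Φ₊ = GProx_{αG, S⁻¹}(Φ₀ - α S ∇F(Φ₀))`. -/
theorem stabilized_semi_implicit_as_generalized_prox
    {H : Type*} [NormedAddCommGroup H] [InnerProductSpace ℝ H]
    [FiniteDimensional ℝ H]
    (L Linv : H →L[ℝ] H)
    (hLinv1 : ∀ x : H, Linv (L x) = x) (hLinv2 : ∀ x : H, L (Linv x) = x)
    (hLsym : ∀ x y : H, ⟪L x, y⟫ = ⟪x, L y⟫)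
    (σ α : ℝ) (hσ : 0 < σ) (hα : 0 < α)
    (T Tinv : H →L[ℝ] H)
    (hT : T = ContinuousLinearMap.id ℝ H - (σ * α) • L)
    (hTinv1 : ∀ x : H, Tinv (T x) = x) (hTinv2 : ∀ x : H, T (Tinv x) = x)
    (S Sinv : H →L[ℝ] H)
    (hS : S = -(Tinv.comp L)) (hSinv : Sinv = -(Linv.comp T))
    (hSsym : ∀ x y : H, ⟪S x, y⟫ = ⟪x, S y⟫)
    (hSpos : ∀ x : H, x ≠ 0 → 0 < ⟪x, S x⟫)
    (F G : H → ℝ) (hF : ContDiff ℝ 1 F) (hG : ContDiff ℝ 1 G)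
    (hG_convex : ConvexOn ℝ Set.univ G)
    (Φ₀ Φp b : H) (hb : b = Φ₀ - α • S (gradient F Φ₀)) :
    ((1 / α) • (Φp - Φ₀) = L (gradient G Φp + gradient F Φ₀ + σ • (Φp - Φ₀)))
      ↔ (∀ Φ : H, α * G Φp + (1 / 2) * ⟪Φp - b, Sinv (Φp - b)⟫
          ≤ α * G Φ + (1 / 2) * ⟪Φ - b, Sinv (Φ - b)⟫) := by
  have hαne : α ≠ 0 := hα.ne'
  set gG := gradient G Φp with hgGdef
  set gF := gradient F Φ₀ with hgFdef
  -- inverse relations for S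
  have hSS1 : ∀ x : H, S (Sinv x) = x := by
    intro x
    simp only [hS, hSinv, ContinuousLinearMap.neg_apply, ContinuousLinearMap.comp_apply,
      map_neg, neg_neg]
    rw [hLinv2, hTinv1]
  have hSS2 : ∀ x : H, Sinv (S x) = x := by
    intro x
    simp only [hS, hSinv, ContinuousLinearMap.neg_apply, ContinuousLinearMap.comp_apply,
      map_neg, neg_neg]
    rw [hTinv2, hLinv1]
  -- symmetry of Sinv
  have hSinvSym : ∀ x y : H, ⟪Sinv x, y⟫ = ⟪x, Sinv y⟫ := by
    intro x y
    calc ⟪Sinv x, y⟫ = ⟪Sinv x, S (Sinv y)⟫ := by rw [hSS1]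
      _ = ⟪S (Sinv x), Sinv y⟫ := (hSsym _ _).symm
      _ = ⟪x, Sinv y⟫ := by rw [hSS1]
  -- positive semidefiniteness of Sinv
  have hSinvPos : ∀ x : H, 0 ≤ ⟪x, Sinv x⟫ := by
    intro x
    by_cases h : Sinv x = 0
    · simp [h]
    · have h1 := hSpos (Sinv x) h
      have h2 : ⟪x, Sinv x⟫ = ⟪Sinv x, S (Sinv x)⟫ := by
        rw [← hSS1 x, hSS2]
        exact real_inner_comm _ _
      linarith
  -- differentiability of G
  have hGdiff : DifferentiableAt ℝ G Φp := (hG.differentiable one_ne_zero).differentiableAt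
  have hgG : HasGradientAt G gG Φp := hGdiff.hasGradientAt
  -- computation of Sinv (Φp - b)
  have hSinvd : Sinv (Φp - Φ₀) = (σ * α) • (Φp - Φ₀) - Linv (Φp - Φ₀) := by
    rw [hSinv, hT]
    simp only [ContinuousLinearMap.neg_apply, ContinuousLinearMap.comp_apply,
      ContinuousLinearMap.sub_apply, ContinuousLinearMap.id_apply,
      ContinuousLinearMap.smul_apply, map_sub, map_smul, hLinv1]
    module
  have hSb : Sinv (Φp - b) = α • gF + ((σ * α) • (Φp - Φ₀) - Linv (Φp - Φ₀)) := by
    have hsplit : Φp - b = (Φp - Φ₀) + α • S gF := by rw [hb]; abel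
    rw [hsplit, map_add, map_smul, hSS2, hSinvd]
    abel
  -- key equivalence: scheme ↔ stationarity
  have hlin_iff : ((1 / α) • (Φp - Φ₀) = L (gG + gF + σ • (Φp - Φ₀)))
      ↔ (Linv (Φp - Φ₀) = α • (gG + gF + σ • (Φp - Φ₀))) := by
    constructor
    · intro h
      have h1 := congrArg Linv h
      rw [map_smul, hLinv1] at h1
      have h2 := congrArg (fun z : H => α • z) h1
      rw [smul_smul, mul_one_div, div_self hαne, one_smul] at h2
      exact h2
    · intro h
      have h1 := congrArg L h
      rw [hLinv2, map_smul] at h1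
      conv_lhs => rw [h1]
      rw [smul_smul, one_div_mul_cancel hαne, one_smul]
  have hstat_iff : ((1 / α) • (Φp - Φ₀) = L (gG + gF + σ • (Φp - Φ₀)))
      ↔ (α • gG + Sinv (Φp - b) = 0) := by
    rw [hlin_iff, hSb]
    constructor
    · intro h
      rw [h]
      module
    · intro h
      have h1 : Linv (Φp - Φ₀) = α • (gG + gF + σ • (Φp - Φ₀)) := by
        linear_combination (norm := module) -h
      exact h1
  rw [hstat_iff]
  constructor
  · -- stationarity → minimality
    intro hstat Φ
    have hSp : Sinv (Φp - b) = -(α • gG) := by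
      rw [← neg_eq_of_add_eq_zero_right hstat]
    have hconv := my_convex_grad_ineq hG_convex (y := Φ) hgG
    have hexp : ⟪Φ - b, Sinv (Φ - b)⟫ = ⟪Φp - b, Sinv (Φp - b)⟫
        + 2 * ⟪Φ - Φp, Sinv (Φp - b)⟫ + ⟪Φ - Φp, Sinv (Φ - Φp)⟫ := by
      have hsplit : Φ - b = (Φp - b) + (Φ - Φp) := by abel
      rw [hsplit, map_add, inner_add_left, inner_add_right, inner_add_right]
      have h1 : ⟪Φp - b, Sinv (Φ - Φp)⟫ = ⟪Φ - Φp, Sinv (Φp - b)⟫ := by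
        rw [← hSinvSym]
        exact real_inner_comm _ _
      rw [h1]; ring
    have hip : ⟪Φ - Φp, Sinv (Φp - b)⟫ = -(α * ⟪gG, Φ - Φp⟫) := by
      rw [hSp, inner_neg_right, real_inner_smul_right, real_inner_comm]
    have hpos := hSinvPos (Φ - Φp)
    have hmul : 0 ≤ α * (G Φ - G Φp - ⟪gG, Φ - Φp⟫) :=
      mul_nonneg hα.le (by linarith)
    rw [hexp, hip]
    nlinarith [hmul, hpos]
  · -- minimality → stationarity
    intro hmin
    set J : H → ℝ := fun Φ => α * G Φ + (1 / 2) * ⟪Φ - b, Sinv (Φ - b)⟫ with hJdef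
    have hq := my_quad_grad Sinv hSinvSym b Φp
    have hJ : HasFDerivAt J (InnerProductSpace.toDual ℝ H (α • gG + Sinv (Φp - b))) Φp := by
      have h1 := hgG.hasFDerivAt.const_mul α
      have h2 := hq.hasFDerivAt
      have h3 := h1.add h2
      convert h3 using 1
      · rfl
      · rfl
      · rfl
      ext v
      simp [inner_add_left, real_inner_smul_left, InnerProductSpace.toDual_apply_apply]
    have hloc : IsLocalMin J Φp := Filter.Eventually.of_forall fun Φ => hmin Φ
    have hz := hloc.hasFDerivAt_eq_zero hJ
    have : α • gG + Sinv (Φp - b) = 0 := by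
      have := congrArg (fun f => (InnerProductSpace.toDual ℝ H).symm f) hz
      simpa using this
    exact this
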